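/- Let F be the free group of rank r ≥ 2 with basis {a_1, ..., a_r}, let 1 ≤ l ≤ r-1, and let F̂ be the subgroup generated by {a_1, ..., a_l}. Fix t ≥ 1 and let γ_{t+1}(F) and γ_{t+1}(F̂) denote the (t+1)-st terms of the lower central series of F and F̂ respectively, so that F/γ_{t+1}(F) is the free nilpotent group of class t and rank r. If S = {x_1, ..., x_k} ⊆ F̂ is such that the image of S in F/γ_{t+1}(F) can be extended to a generating set of F/γ_{t+1}(F) of cardinality r (equivalently, to a basis), then the image of S in F̂/γ_{t+1}(F̂) can be extended to a generating set of F̂/γ_{t+1}(F̂) of cardinality l. -/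

import Mathlib

open scoped commutatorElement

section Aux
variable {G : Type*} {H : Type*} [Group G] [Group H]

theorem lcs_map_eq (f : G →* H) (hf : Function.Surjective f) (n : ℕ) :
    Subgroup.map f ((⊤ : Subgroup G).lowerCentralSeries n) = (⊤ : Subgroup H).lowerCentralSeries n := by
  induction n with
  | zero => simpa using Subgroup.map_top_of_surjective f hf
  | succ n ih =>
    show Subgroup.map f ⁅(⊤ : Subgroup G).lowerCentralSeries n, ⊤⁆ = ⁅(⊤ : Subgroup H).lowerCentralSeries n, ⊤⁆
    rw [Subgroup.map_commutator, ih, Subgroup.map_top_of_surjective f hf]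

/-- If `Z` is central, `K ⊔ Z = ⊤` and `K ⊔ commutator = ⊤`, then `K = ⊤`. -/
theorem eq_top_of_central_aux {K Z : Subgroup G} (hZ : Z ≤ Subgroup.center G)
    (h1 : K ⊔ Z = ⊤) (h2 : K ⊔ commutator G = ⊤) : K = ⊤ := by
  have swap : ∀ c : G, (∀ g, g * c = c * g) → ∀ a b : G, a * c * b = a * b * c := by
    intro c hc a b; rw [mul_assoc, ← hc b, ← mul_assoc]
  have hZn : Z.Normal := ⟨fun z hz g => by
    rw [Subgroup.mem_center_iff.mp (hZ hz) g]; simpa⟩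
  have hcomm : commutator G ≤ K := by
    rw [commutator_eq_closure, Subgroup.closure_le]
    rintro w ⟨p, q, rfl⟩
    have hp : p ∈ (K ⊔ Z : Subgroup G) := h1 ▸ Subgroup.mem_top p
    have hq : q ∈ (K ⊔ Z : Subgroup G) := h1 ▸ Subgroup.mem_top q
    rw [← SetLike.mem_coe, Subgroup.mul_normal] at hp hq
    obtain ⟨k, hk, z, hz, rfl⟩ := hp
    obtain ⟨k', hk', z', hz', rfl⟩ := hq
    have hzc := Subgroup.mem_center_iff.mp (hZ hz)
    have hzc' := Subgroup.mem_center_iff.mp (hZ hz')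
    have key : ⁅k * z, k' * z'⁆ = ⁅k, k'⁆ := by
      rw [commutatorElement_def, commutatorElement_def, mul_inv_rev, mul_inv_rev]
      calc k * z * (k' * z') * (z⁻¹ * k⁻¹) * (z'⁻¹ * k'⁻¹)
          = k * (k' * z') * z * (z⁻¹ * k⁻¹) * (z'⁻¹ * k'⁻¹) := by rw [swap z hzc]
        _ = k * (k' * z') * (z * (z⁻¹ * k⁻¹)) * (z'⁻¹ * k'⁻¹) := by rw [mul_assoc (k * (k' * z'))]
        _ = k * (k' * z') * k⁻¹ * (z'⁻¹ * k'⁻¹) := by rw [← mul_assoc z, mul_inv_cancel, one_mul]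
        _ = k * k' * z' * k⁻¹ * (z'⁻¹ * k'⁻¹) := by rw [← mul_assoc k]
        _ = k * k' * k⁻¹ * z' * (z'⁻¹ * k'⁻¹) := by rw [swap z' hzc']
        _ = k * k' * k⁻¹ * (z' * (z'⁻¹ * k'⁻¹)) := by rw [mul_assoc (k * k' * k⁻¹)]
        _ = k * k' * k⁻¹ * k'⁻¹ := by rw [← mul_assoc z', mul_inv_cancel, one_mul]
    rw [key]
    exact K.mul_mem (K.mul_mem (K.mul_mem hk hk') (K.inv_mem hk)) (K.inv_mem hk')
  rw [← h2, sup_eq_left.mpr hcomm]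

end Aux


/-- Frattini-type argument for groups with vanishing lower central series. -/
theorem frattini_lcs {Q : Type*} [Group Q] {K : Subgroup Q} {t : ℕ} (ht : 1 ≤ t)
    (hbot : (⊤ : Subgroup Q).lowerCentralSeries t = ⊥) (h2 : K ⊔ commutator Q = ⊤) : K = ⊤ := by
  have main : ∀ m : ℕ, K ⊔ (⊤ : Subgroup Q).lowerCentralSeries (m + 1) = ⊤ := by
    intro m
    induction m with
    | zero =>
      show K ⊔ (⊤ : Subgroup Q).lowerCentralSeries 1 = ⊤
      rw [Subgroup.top_lowerCentralSeries_one]; exact h2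
    | succ m ih =>
      set N := (⊤ : Subgroup Q).lowerCentralSeries (m + 2) with hN
      set φ := QuotientGroup.mk' N with hφ
      have hsurj : Function.Surjective φ := QuotientGroup.mk_surjective
      have hker : φ.ker = N := QuotientGroup.ker_mk' N
      -- the image of `(⊤ : Subgroup Q).lowerCentralSeries (m+1)` is central in the quotient
      have hcent : Subgroup.map φ ((⊤ : Subgroup Q).lowerCentralSeries (m + 1)) ≤ Subgroup.center (Q ⧸ N) := by
        rintro _ ⟨g, hg, rfl⟩
        rw [Subgroup.mem_center_iff]
        intro qq
        induction qq using QuotientGroup.induction_on with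
        | H h =>
          show QuotientGroup.mk (h * g) = QuotientGroup.mk (g * h)
          rw [QuotientGroup.eq]
          have : ⁅g⁻¹, h⁻¹⁆ ∈ N := by
            show _ ∈ (⊤ : Subgroup Q).lowerCentralSeries (m + 2)
            show _ ∈ ⁅(⊤ : Subgroup Q).lowerCentralSeries (m + 1), (⊤ : Subgroup Q)⁆
            exact Subgroup.commutator_mem_commutator
              (((⊤ : Subgroup Q).lowerCentralSeries (m + 1)).inv_mem hg) (Subgroup.mem_top h⁻¹)
          have heq : (h * g)⁻¹ * (g * h) = ⁅g⁻¹, h⁻¹⁆ := by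
            rw [commutatorElement_def]; group
          rwa [heq]
      have htop1 : Subgroup.map φ K ⊔ Subgroup.map φ ((⊤ : Subgroup Q).lowerCentralSeries (m + 1)) = ⊤ := by
        rw [← Subgroup.map_sup, ih, Subgroup.map_top_of_surjective φ hsurj]
      have htop2 : Subgroup.map φ K ⊔ commutator (Q ⧸ N) = ⊤ := by
        have : commutator (Q ⧸ N) = Subgroup.map φ (commutator Q) := by
          rw [← Subgroup.top_lowerCentralSeries_one, ← Subgroup.top_lowerCentralSeries_one, lcs_map_eq φ hsurj]
        rw [this, ← Subgroup.map_sup, h2, Subgroup.map_top_of_surjective φ hsurj]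
      have := eq_top_of_central_aux hcent htop1 htop2
      have hcomap : K ⊔ N = ⊤ := by
        rw [← hker, ← Subgroup.comap_map_eq, this, Subgroup.comap_top]
      exact hcomap
  obtain ⟨s, rfl⟩ := Nat.exists_eq_add_of_le ht
  rw [Nat.add_comm] at hbot
  have := main s
  rwa [hbot, sup_bot_eq] at this

/-- The submodule of `Fin r → ℤ` of vectors supported on the first `l` coordinates. -/
def Wsub (r l : ℕ) : Submodule ℤ (Fin r → ℤ) where
  carrier := {f | ∀ j : Fin r, l ≤ (j : ℕ) → f j = 0}
  add_mem' := fun hf hg j hj => by simp [hf j hj, hg j hj]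
  zero_mem' := fun j hj => rfl
  smul_mem' := fun c f hf j hj => by simp [hf j hj]

theorem single_mem_Wsub {r l : ℕ} (i : Fin r) (hi : (i : ℕ) < l) (a : ℤ) :
    Pi.single i a ∈ Wsub r l := by
  intro j hj
  have : j ≠ i := by rintro rfl; omega
  simp [Pi.single_apply, this.symm]

theorem Wsub_le_span {r l : ℕ} :
    Wsub r l ≤ Submodule.span ℤ ((fun i : Fin r => (Pi.single i 1 : Fin r → ℤ)) ''
      {i : Fin r | (i : ℕ) < l}) := by
  intro u hu
  rw [← Finset.univ_sum_single u]
  apply Submodule.sum_mem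
  intro j _
  by_cases hj : (j : ℕ) < l
  · have : (Pi.single j (u j) : Fin r → ℤ) = u j • Pi.single j 1 := by
      rw [← Pi.single_smul, smul_eq_mul, mul_one]
    rw [this]
    exact Submodule.smul_mem _ _ (Submodule.subset_span ⟨j, hj, rfl⟩)
  · rw [hu j (le_of_not_gt hj)]
    simp

set_option maxHeartbeats 1000000 in
theorem extend_lemma {r l : ℕ} (hlr : l ≤ r) (v : Fin r → (Fin r → ℤ))
    (hspan : Submodule.span ℤ (Set.range v) = ⊤) (S₀ : Finset (Fin r → ℤ))
    (hS₀v : (S₀ : Set (Fin r → ℤ)) ⊆ Set.range v)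
    (hS₀W : (S₀ : Set (Fin r → ℤ)) ⊆ (Wsub r l : Set (Fin r → ℤ))) :
    ∃ (m : ℕ) (c : Fin m → (Fin r → ℤ)), S₀.card + m = l ∧ (∀ i, c i ∈ Wsub r l) ∧
      Function.Injective c ∧ (∀ i, c i ∉ S₀) ∧
      Wsub r l ≤ Submodule.span ℤ ((S₀ : Set (Fin r → ℤ)) ∪ Set.range c) := by
  classical
  -- linear independence of `v`
  have hsurj : Function.Surjective (Fintype.linearCombination ℤ v) := by
    rw [← LinearMap.range_eq_top, Fintype.range_linearCombination, hspan]
  have hinj := OrzechProperty.injective_of_surjective_endomorphism _ hsurj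
  have hli : LinearIndependent ℤ v := by
    rw [Fintype.linearIndependent_iff]
    intro g hg i
    have h0 : Fintype.linearCombination ℤ v g = Fintype.linearCombination ℤ v 0 := by
      rw [Fintype.linearCombination_apply]
      simpa using hg
    have := hinj h0
    rw [this]; rfl
  set J : Set (Fin r) := {j | v j ∈ S₀} with hJ
  have himg : v '' J = (S₀ : Set (Fin r → ℤ)) := by
    apply Set.Subset.antisymm
    · rintro _ ⟨j, hj, rfl⟩; exact hj
    · intro s hs
      obtain ⟨j, rfl⟩ := hS₀v hs
      exact ⟨j, hs, rfl⟩
  set U : Submodule ℤ (Fin r → ℤ) := Submodule.span ℤ (v '' Jᶜ) ⊓ Wsub r l with hU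
  have hspanS₀W : Submodule.span ℤ (S₀ : Set (Fin r → ℤ)) ≤ Wsub r l := by
    rw [Submodule.span_le]; exact hS₀W
  have hWsup : Submodule.span ℤ (S₀ : Set (Fin r → ℤ)) ⊔ U = Wsub r l := by
    rw [hU, ← himg]
    rw [← sup_inf_assoc_of_le _ (himg ▸ hspanS₀W : Submodule.span ℤ (v '' J) ≤ Wsub r l)]
    rw [← Submodule.span_union, ← Set.image_union, Set.union_compl_self, Set.image_univ, hspan]
    exact top_inf_eq _
  -- basis of U
  obtain ⟨m, cb⟩ := Submodule.basisOfPid (Pi.basisFun ℤ (Fin r)) U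
  set c : Fin m → (Fin r → ℤ) := fun i => (cb i : Fin r → ℤ) with hc
  have hcW : ∀ i, c i ∈ Wsub r l := fun i => (cb i).2.2
  have hcJc : ∀ i, c i ∈ Submodule.span ℤ (v '' Jᶜ) := fun i => (cb i).2.1
  have hdisj : Disjoint (Submodule.span ℤ (v '' J)) (Submodule.span ℤ (v '' Jᶜ)) :=
    hli.disjoint_span_image disjoint_compl_right
  have hcinj : Function.Injective c :=
    Subtype.val_injective.comp cb.injective
  have hcnotin : ∀ i, c i ∉ S₀ := by
    intro i hi
    have h1 : c i ∈ Submodule.span ℤ (v '' J) := Submodule.subset_span (himg ▸ hi)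
    have h0 : c i = 0 := Submodule.disjoint_def.mp hdisj _ h1 (hcJc i)
    have : cb i = 0 := Subtype.ext (by simp only [ZeroMemClass.coe_zero]; exact h0)
    exact cb.ne_zero i this
  have hUc : U ≤ Submodule.span ℤ (Set.range c) := by
    intro u hu
    have h1 : (⟨u, hu⟩ : U) ∈ Submodule.span ℤ (Set.range cb) := by
      rw [cb.span_eq]; trivial
    have h2 := Submodule.mem_map_of_mem (f := U.subtype) h1
    rw [Submodule.map_span] at h2
    have : U.subtype '' Set.range cb = Set.range c := by
      rw [← Set.range_comp]; rfl
    rwa [this] at h2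
  have hspanW : Submodule.span ℤ ((S₀ : Set (Fin r → ℤ)) ∪ Set.range c) = Wsub r l := by
    rw [Submodule.span_union]
    apply le_antisymm
    · refine sup_le hspanS₀W ?_
      rw [Submodule.span_le]
      rintro _ ⟨i, rfl⟩; exact hcW i
    · rw [← hWsup]
      exact sup_le_sup_left hUc _
  -- two bases of W
  have hfin1 : Module.finrank ℤ (Wsub r l) = l := by
    have hσli : LinearIndependent ℤ
        (fun j : Fin l => (⟨Pi.single (Fin.castLE hlr j) 1,
          single_mem_Wsub _ (by simp) 1⟩ : Wsub r l)) := by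
      apply LinearIndependent.of_comp (Wsub r l).subtype
      have : ((Wsub r l).subtype ∘ fun j : Fin l => (⟨Pi.single (Fin.castLE hlr j) 1,
          single_mem_Wsub _ (by simp) 1⟩ : Wsub r l)) =
          (Pi.basisFun ℤ (Fin r)) ∘ (Fin.castLE hlr) := by
        funext j; simp [Pi.basisFun_apply]
      rw [this]
      exact (Pi.basisFun ℤ (Fin r)).linearIndependent.comp _ (Fin.castLE_injective hlr)
    have hσsp : ⊤ ≤ Submodule.span ℤ (Set.range (fun j : Fin l =>
        (⟨Pi.single (Fin.castLE hlr j) 1, single_mem_Wsub _ (by simp) 1⟩ : Wsub r l))) := by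
      have hmap : Submodule.map (Wsub r l).subtype (Submodule.span ℤ (Set.range (fun j : Fin l =>
          (⟨Pi.single (Fin.castLE hlr j) 1, single_mem_Wsub _ (by simp) 1⟩ : Wsub r l)))) =
          Submodule.map (Wsub r l).subtype ⊤ := by
        rw [Submodule.map_span, ← Set.range_comp, Submodule.map_top, Submodule.range_subtype]
        have : (Set.range ((Wsub r l).subtype ∘ fun j : Fin l =>
            (⟨Pi.single (Fin.castLE hlr j) 1, single_mem_Wsub _ (by simp) 1⟩ : Wsub r l))) =
            (fun i : Fin r => (Pi.single i 1 : Fin r → ℤ)) '' {i : Fin r | (i : ℕ) < l} := by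
          ext u
          constructor
          · rintro ⟨j, rfl⟩; exact ⟨Fin.castLE hlr j, by simp, rfl⟩
          · rintro ⟨i, hi, rfl⟩
            exact ⟨⟨(i : ℕ), hi⟩, by simp [Fin.castLE]⟩
        rw [this]
        apply le_antisymm
        · rw [Submodule.span_le]
          rintro _ ⟨i, hi, rfl⟩
          exact single_mem_Wsub i hi 1
        · exact Wsub_le_span
      have := Submodule.map_injective_of_injective (Wsub r l).injective_subtype hmap
      rw [this]
    let B := Module.Basis.mk hσli hσsp
    rw [Module.finrank_eq_card_basis B, Fintype.card_fin]
  have hfin2 : Module.finrank ℤ (Wsub r l) = S₀.card + m := by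
    let F : ({x // x ∈ S₀} ⊕ Fin m) → Wsub r l :=
      Sum.elim (fun s => ⟨(s : Fin r → ℤ), hS₀W s.2⟩) (fun i => ⟨c i, hcW i⟩)
    have hFli : LinearIndependent ℤ F := by
      apply LinearIndependent.of_comp (Wsub r l).subtype
      have hcomp : ((Wsub r l).subtype ∘ F) =
          Sum.elim (fun s : {x // x ∈ S₀} => (s : Fin r → ℤ)) c := by
        funext j; cases j <;> rfl
      rw [hcomp]
      apply LinearIndependent.sum_type
      · exact hli.linearIndepOn_id.mono hS₀v
      · exact cb.linearIndependent.map' U.subtype (Submodule.ker_subtype _)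
      · have e1 : Submodule.span ℤ (Set.range (fun s : {x // x ∈ S₀} => (s : Fin r → ℤ))) ≤
            Submodule.span ℤ (v '' J) := by
          rw [Subtype.range_coe_subtype]
          apply Submodule.span_mono
          rw [himg]; intro y hy; exact hy
        have e2 : Submodule.span ℤ (Set.range c) ≤ Submodule.span ℤ (v '' Jᶜ) := by
          rw [Submodule.span_le]; rintro _ ⟨i, rfl⟩; exact hcJc i
        exact hdisj.mono e1 e2
    have hFsp : ⊤ ≤ Submodule.span ℤ (Set.range F) := by
      have hmap : Submodule.map (Wsub r l).subtype (Submodule.span ℤ (Set.range F)) =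
          Submodule.map (Wsub r l).subtype ⊤ := by
        rw [Submodule.map_span, ← Set.range_comp, Submodule.map_top, Submodule.range_subtype]
        have hcomp : ((Wsub r l).subtype ∘ F) =
            Sum.elim (fun s : {x // x ∈ S₀} => (s : Fin r → ℤ)) c := by
          funext j; cases j <;> rfl
        rw [hcomp, Set.Sum.elim_range _ _, Subtype.range_coe_subtype]
        exact hspanW
      have := Submodule.map_injective_of_injective (Wsub r l).injective_subtype hmap
      rw [this]
    let B := Module.Basis.mk hFli hFsp
    rw [Module.finrank_eq_card_basis B, Fintype.card_sum, Fintype.card_coe, Fintype.card_fin]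
  refine ⟨m, c, ?_, hcW, hcinj, hcnotin, hspanW ▸ le_refl _⟩
  rw [← hfin2, hfin1]

/-- The subgroup of the free group on `Fin r` generated by the first `l` generators. -/
def hatSubgroup (r l : ℕ) : Subgroup (FreeGroup (Fin r)) :=
  Subgroup.closure (FreeGroup.of '' {i : Fin r | (i : ℕ) < l})

/-- The free nilpotent quotient `G/γ_{t+1}(G)` of class `t`.  Note that Mathlib's
`(⊤ : Subgroup G).lowerCentralSeries 0 = G = γ₁(G)`, so `γ_{t+1}(G) = (⊤ : Subgroup G).lowerCentralSeries t`. -/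
abbrev NilpotentQuot (t : ℕ) (G : Type*) [Group G] := G ⧸ (⊤ : Subgroup G).lowerCentralSeries t

section Plumbing

variable (r l : ℕ)

theorem of_mem_hat {i : Fin r} (hi : (i : ℕ) < l) : FreeGroup.of i ∈ hatSubgroup r l :=
  Subgroup.subset_closure ⟨i, hi, rfl⟩

/-- The retraction of the free group onto the hat subgroup. -/
noncomputable def hatRetract : FreeGroup (Fin r) →* hatSubgroup r l :=
  FreeGroup.lift (fun i => if h : (i : ℕ) < l then
    (⟨FreeGroup.of i, of_mem_hat r l h⟩ : hatSubgroup r l) else 1)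

theorem hatRetract_coe (y : hatSubgroup r l) : hatRetract r l (y : FreeGroup (Fin r)) = y := by
  obtain ⟨g, hg⟩ := y
  apply Subtype.ext
  show ((hatRetract r l g : hatSubgroup r l) : FreeGroup (Fin r)) = g
  induction hg using Subgroup.closure_induction with
  | mem g hgmem =>
    obtain ⟨i, hi, rfl⟩ := hgmem
    simp only [hatRetract, FreeGroup.lift_apply_of]
    exact congrArg _ (dif_pos (show (i:ℕ) < l from hi))
  | one => simp
  | mul a b _ _ ha hb => simp [map_mul, ha, hb]
  | inv a _ ha => simp [map_inv, ha]

theorem lcs_hat_le (n : ℕ) :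
    (⊤ : Subgroup (hatSubgroup r l)).lowerCentralSeries n ≤
      ((⊤ : Subgroup (FreeGroup (Fin r))).lowerCentralSeries n).comap (hatSubgroup r l).subtype := by
  rw [← Subgroup.map_le_iff_le_comap]
  exact lowerCentralSeries_map_subtype_le _ n

/-- The induced embedding on nilpotent quotients. -/
noncomputable def Qinc (t : ℕ) : NilpotentQuot t (hatSubgroup r l) →*
    NilpotentQuot t (FreeGroup (Fin r)) :=
  QuotientGroup.map _ _ (hatSubgroup r l).subtype (lcs_hat_le r l t)

/-- The induced retraction on nilpotent quotients. -/
noncomputable def Qret (t : ℕ) : NilpotentQuot t (FreeGroup (Fin r)) →*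
    NilpotentQuot t (hatSubgroup r l) :=
  QuotientGroup.map _ _ (hatRetract r l)
    (Subgroup.map_le_iff_le_comap.mp (lowerCentralSeries.map (hatRetract r l) t))

theorem Qinc_mk (t : ℕ) (y : hatSubgroup r l) :
    Qinc r l t (QuotientGroup.mk y) = QuotientGroup.mk (y : FreeGroup (Fin r)) :=
  QuotientGroup.map_mk _ _ _ _ _

theorem Qret_Qinc (t : ℕ) (q : NilpotentQuot t (hatSubgroup r l)) :
    Qret r l t (Qinc r l t q) = q := by
  induction q using QuotientGroup.induction_on with
  | H y =>
    show Qret r l t (QuotientGroup.map _ _ _ _ (QuotientGroup.mk y)) = _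
    rw [QuotientGroup.map_mk]
    show QuotientGroup.map _ _ _ _ (QuotientGroup.mk _) = _
    rw [QuotientGroup.map_mk]
    exact congrArg _ (hatRetract_coe r l y)

/-- Abelianization of the free group into `Fin r → ℤ`. -/
noncomputable def abF : FreeGroup (Fin r) →* Multiplicative (Fin r → ℤ) :=
  FreeGroup.lift (fun i => Multiplicative.ofAdd (Pi.single i 1))

theorem lcs_le_ker_abF (t : ℕ) (ht : 1 ≤ t) :
    (⊤ : Subgroup (FreeGroup (Fin r))).lowerCentralSeries t ≤ (abF r).ker := by
  calc (⊤ : Subgroup (FreeGroup (Fin r))).lowerCentralSeries t ≤ (⊤ : Subgroup (FreeGroup (Fin r))).lowerCentralSeries 1 :=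
        Subgroup.lowerCentralSeries_antitone _ ht
    _ = commutator (FreeGroup (Fin r)) := Subgroup.top_lowerCentralSeries_one
    _ ≤ (abF r).ker := Abelianization.commutator_subset_ker _

/-- Abelianization on the nilpotent quotient. -/
noncomputable def abQ (t : ℕ) (ht : 1 ≤ t) :
    NilpotentQuot t (FreeGroup (Fin r)) →* Multiplicative (Fin r → ℤ) :=
  QuotientGroup.lift _ (abF r) (lcs_le_ker_abF r t ht)

theorem abQ_mk (t : ℕ) (ht : 1 ≤ t) (g : FreeGroup (Fin r)) :
    abQ r t ht (QuotientGroup.mk g) = abF r g := rfl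

theorem abF_hat_mem_W {g : FreeGroup (Fin r)} (hg : g ∈ hatSubgroup r l) :
    (abF r g).toAdd ∈ Wsub r l := by
  induction hg using Subgroup.closure_induction with
  | mem g hgmem =>
    obtain ⟨i, hi, rfl⟩ := hgmem
    have : abF r (FreeGroup.of i) = Multiplicative.ofAdd (Pi.single i 1) := FreeGroup.lift_apply_of
    rw [this]
    exact single_mem_Wsub i hi 1
  | one => simpa using (Wsub r l).zero_mem
  | mul a b _ _ ha hb => rw [map_mul, toAdd_mul]; exact (Wsub r l).add_mem ha hb
  | inv a _ ha => rw [map_inv, toAdd_inv]; exact (Wsub r l).neg_mem ha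

/-- A canonical word with prescribed abelianization. -/
noncomputable def eWord (u : Fin r → ℤ) : FreeGroup (Fin r) :=
  (List.ofFn (fun j : Fin r => (FreeGroup.of j) ^ (u j))).prod

theorem eWord_mem_hat {u : Fin r → ℤ} (hu : u ∈ Wsub r l) : eWord r u ∈ hatSubgroup r l := by
  apply Subgroup.list_prod_mem
  intro g hg
  obtain ⟨j, rfl⟩ := List.mem_ofFn.mp hg
  by_cases hj : (j : ℕ) < l
  · exact Subgroup.zpow_mem _ (of_mem_hat r l hj) _
  · show FreeGroup.of j ^ u j ∈ hatSubgroup r l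
    rw [hu j (le_of_not_gt hj)]
    simpa using (hatSubgroup r l).one_mem

theorem abF_eWord (u : Fin r → ℤ) : abF r (eWord r u) = Multiplicative.ofAdd u := by
  rw [eWord, map_list_prod, List.map_ofFn, List.prod_ofFn]
  have : ∀ j : Fin r, abF r ((FreeGroup.of j) ^ (u j)) =
      Multiplicative.ofAdd (Pi.single j (u j)) := by
    intro j
    rw [map_zpow]
    have h1 : abF r (FreeGroup.of j) = Multiplicative.ofAdd (Pi.single j 1) := FreeGroup.lift_apply_of
    rw [h1]
    apply Multiplicative.toAdd.injective
    rw [toAdd_zpow]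
    simp only [toAdd_ofAdd]
    rw [← Pi.single_smul, smul_eq_mul, mul_one]
  rw [Finset.prod_congr rfl (fun j _ => (show (⇑(abF r) ∘ fun j => FreeGroup.of j ^ u j) j = _ from this j))]
  apply Multiplicative.toAdd.injective
  rw [toAdd_prod]
  simp only [toAdd_ofAdd]
  exact Finset.univ_sum_single u

end Plumbing

section MoreAux

theorem ker_abelianization_of {G : Type*} [Group G] :
    (Abelianization.of : G →* Abelianization G).ker = commutator G := by
  ext g
  show (QuotientGroup.mk g : Abelianization G) = 1 ↔ _
  exact QuotientGroup.eq_one_iff g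

theorem lcs_quot_bot {G : Type*} [Group G] (t : ℕ) :
    (⊤ : Subgroup (NilpotentQuot t G)).lowerCentralSeries t = ⊥ := by
  rw [← lcs_map_eq (QuotientGroup.mk' ((⊤ : Subgroup G).lowerCentralSeries t)) QuotientGroup.mk_surjective t]
  rw [eq_bot_iff]
  rintro _ ⟨g, hg, rfl⟩
  rw [Subgroup.mem_bot]
  exact (QuotientGroup.eq_one_iff g).mpr hg

theorem quot_closure_top (r l t : ℕ) :
    Subgroup.closure (QuotientGroup.mk ''
      ((↑) ⁻¹' (FreeGroup.of '' {i : Fin r | (i : ℕ) < l}) : Set (hatSubgroup r l)) :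
      Set (NilpotentQuot t (hatSubgroup r l))) = ⊤ := by
  have h1 : Subgroup.closure
      ((↑) ⁻¹' (FreeGroup.of '' {i : Fin r | (i : ℕ) < l}) : Set (hatSubgroup r l)) = ⊤ :=
    Subgroup.closure_closure_coe_preimage
  have h2 := MonoidHom.map_closure
    (QuotientGroup.mk' ((⊤ : Subgroup (hatSubgroup r l)).lowerCentralSeries t))
    ((↑) ⁻¹' (FreeGroup.of '' {i : Fin r | (i : ℕ) < l}) : Set (hatSubgroup r l))
  rw [h1, Subgroup.map_top_of_surjective _ QuotientGroup.mk_surjective] at h2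
  exact h2.symm

noncomputable def muMap (r l t : ℕ) :
    (Fin r → ℤ) →ₗ[ℤ] Additive (Abelianization (NilpotentQuot t (hatSubgroup r l))) :=
  Fintype.linearCombination ℤ (fun j : Fin r =>
    if h : (j : ℕ) < l then
      Additive.ofMul (Abelianization.of (QuotientGroup.mk
        (⟨FreeGroup.of j, of_mem_hat r l h⟩ : hatSubgroup r l) :
        NilpotentQuot t (hatSubgroup r l)))
    else 0)

theorem muMap_key (r l t : ℕ) (ht : 1 ≤ t) (q : NilpotentQuot t (hatSubgroup r l)) :
    muMap r l t ((abQ r t ht (Qinc r l t q)).toAdd) =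
      Additive.ofMul (Abelianization.of q) := by
  have hq : q ∈ (⊤ : Subgroup (NilpotentQuot t (hatSubgroup r l))) := trivial
  rw [← quot_closure_top r l t] at hq
  induction hq using Subgroup.closure_induction with
  | mem q hq =>
    obtain ⟨y, hy, rfl⟩ := hq
    obtain ⟨i, hi, hyv⟩ := hy
    have hyy : y = ⟨FreeGroup.of i, of_mem_hat r l hi⟩ := Subtype.ext hyv.symm
    subst hyy
    have h1 : Qinc r l t (QuotientGroup.mk ⟨FreeGroup.of i, of_mem_hat r l hi⟩) =
        QuotientGroup.mk (FreeGroup.of i) := QuotientGroup.map_mk _ _ _ _ _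
    rw [h1, abQ_mk]
    have h2 : abF r (FreeGroup.of i) = Multiplicative.ofAdd (Pi.single i 1) := FreeGroup.lift_apply_of
    rw [h2]
    simp only [toAdd_ofAdd]
    rw [muMap, Fintype.linearCombination_apply_single, one_smul,
      dif_pos (show (i : ℕ) < l from hi)]
  | one => simp
  | mul a b _ _ hma hmb =>
    rw [map_mul, map_mul, toAdd_mul, map_add, hma, hmb, map_mul, ofMul_mul]
  | inv a _ hma =>
    rw [map_inv, map_inv, toAdd_inv, map_neg, hma, map_inv, ofMul_inv]

end MoreAux

theorem li_of_span_top {r : ℕ} (v : Fin r → (Fin r → ℤ))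
    (hspan : Submodule.span ℤ (Set.range v) = ⊤) : LinearIndependent ℤ v := by
  have hsurj : Function.Surjective (Fintype.linearCombination ℤ v) := by
    rw [← LinearMap.range_eq_top, Fintype.range_linearCombination, hspan]
  have hinj := OrzechProperty.injective_of_surjective_endomorphism _ hsurj
  rw [Fintype.linearIndependent_iff]
  intro g hg i
  have h0 : Fintype.linearCombination ℤ v g = Fintype.linearCombination ℤ v 0 := by
    rw [Fintype.linearCombination_apply]
    simpa using hg
  have := hinj h0
  rw [this]; rfl

set_option maxHeartbeats 2000000 in
theorem stmt3 (t : ℕ) (ht : 1 ≤ t) (r l k : ℕ) (hr : 2 ≤ r) (hl : 1 ≤ l) (hlr : l ≤ r - 1)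
    (x : Fin k → FreeGroup (Fin r)) (hx : ∀ i, x i ∈ hatSubgroup r l)
    (hprim : ∃ T : Finset (NilpotentQuot t (FreeGroup (Fin r))),
      (∀ i, (QuotientGroup.mk (x i) : NilpotentQuot t (FreeGroup (Fin r))) ∈ T) ∧
        Subgroup.closure (T : Set (NilpotentQuot t (FreeGroup (Fin r)))) = ⊤ ∧ T.card = r) :
    ∃ T : Finset (NilpotentQuot t (hatSubgroup r l)),
      (∀ i, (QuotientGroup.mk (⟨x i, hx i⟩ : hatSubgroup r l) :
          NilpotentQuot t (hatSubgroup r l)) ∈ T) ∧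
        Subgroup.closure (T : Set (NilpotentQuot t (hatSubgroup r l))) = ⊤ ∧ T.card = l := by
  classical
  obtain ⟨T, hT, hTgen, hTcard⟩ := hprim
  have hlr' : l ≤ r := le_trans hlr (Nat.sub_le r 1)
  set ab := abQ r t ht with hab
  let e : Fin r ≃ {a // a ∈ T} := (T.equivFin.trans (finCongr hTcard)).symm
  set v : Fin r → (Fin r → ℤ) := fun j => (ab ((e j : NilpotentQuot t (FreeGroup (Fin r))))).toAdd
    with hv
  -- every abelianized element is in the span of `v`
  have hTspan : ∀ q : NilpotentQuot t (FreeGroup (Fin r)),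
      (ab q).toAdd ∈ Submodule.span ℤ (Set.range v) := by
    intro q
    have hq : q ∈ Subgroup.closure (T : Set (NilpotentQuot t (FreeGroup (Fin r)))) := by
      rw [hTgen]; trivial
    induction hq using Subgroup.closure_induction with
    | mem q hq =>
      apply Submodule.subset_span
      refine ⟨e.symm ⟨q, hq⟩, ?_⟩
      show (ab ((e (e.symm ⟨q, hq⟩) : {a // a ∈ T}) :
        NilpotentQuot t (FreeGroup (Fin r)))).toAdd = (ab q).toAdd
      rw [Equiv.apply_symm_apply]
    | one => rw [map_one, toAdd_one]; exact Submodule.zero_mem _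
    | mul a b _ _ ha hb => rw [map_mul, toAdd_mul]; exact Submodule.add_mem _ ha hb
    | inv a _ ha => rw [map_inv, toAdd_inv]; exact Submodule.neg_mem _ ha
  have hvspan : Submodule.span ℤ (Set.range v) = ⊤ := by
    rw [eq_top_iff]
    intro u _
    rw [← Finset.univ_sum_single u]
    apply Submodule.sum_mem
    intro j _
    have h1 : (Pi.single j (u j) : Fin r → ℤ) = u j • Pi.single j 1 := by
      rw [← Pi.single_smul, smul_eq_mul, mul_one]
    rw [h1]
    apply Submodule.smul_mem
    have h2 : (Pi.single j 1 : Fin r → ℤ) =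
        (ab (QuotientGroup.mk (FreeGroup.of j))).toAdd := by
      rw [hab, abQ_mk]
      have : abF r (FreeGroup.of j) = Multiplicative.ofAdd (Pi.single j 1) := FreeGroup.lift_apply_of
      rw [this, toAdd_ofAdd]
    rw [h2]
    exact hTspan _
  have hli : LinearIndependent ℤ v := li_of_span_top v hvspan
  have hvinj : Function.Injective v := hli.injective
  -- the elements in the hat quotient
  set qh : Fin k → NilpotentQuot t (hatSubgroup r l) :=
    fun i => QuotientGroup.mk (⟨x i, hx i⟩ : hatSubgroup r l) with hqh
  have hQincqh : ∀ i, Qinc r l t (qh i) = QuotientGroup.mk (x i) :=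
    fun i => QuotientGroup.map_mk _ _ _ _ _
  set w : Fin k → (Fin r → ℤ) := fun i => (ab (QuotientGroup.mk (x i))).toAdd with hw
  have hww : ∀ i, w i = v (e.symm ⟨QuotientGroup.mk (x i), hT i⟩) := by
    intro i
    rw [hv]
    show w i = (ab _).toAdd
    congr 2
    rw [Equiv.apply_symm_apply]
  have hinj : ∀ i j, w i = w j → qh i = qh j := by
    intro i j hij
    rw [hww i, hww j] at hij
    have h1 := hvinj hij
    have h2 : (QuotientGroup.mk (x i) : NilpotentQuot t (FreeGroup (Fin r))) =
        QuotientGroup.mk (x j) := by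
      have := congrArg (fun a => (e a : NilpotentQuot t (FreeGroup (Fin r)))) h1
      simpa [Equiv.apply_symm_apply] using this
    calc qh i = Qret r l t (Qinc r l t (qh i)) := (Qret_Qinc r l t _).symm
      _ = Qret r l t (Qinc r l t (qh j)) := by rw [hQincqh, hQincqh, h2]
      _ = qh j := Qret_Qinc r l t _
  set S₀ : Finset (Fin r → ℤ) := Finset.image w Finset.univ with hS₀
  set Sh : Finset (NilpotentQuot t (hatSubgroup r l)) := Finset.image qh Finset.univ with hSh
  have hcardeq : S₀.card = Sh.card := by
    have himg : S₀ = Sh.image (fun q => (ab (Qinc r l t q)).toAdd) := by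
      rw [hSh, Finset.image_image, hS₀]
      apply Finset.image_congr
      intro i _
      show w i = (ab (Qinc r l t (qh i))).toAdd
      rw [hQincqh]
    rw [himg]
    apply Finset.card_image_of_injOn
    intro a ha b hb hfab
    obtain ⟨i, _, rfl⟩ := Finset.mem_image.mp ha
    obtain ⟨j, _, rfl⟩ := Finset.mem_image.mp hb
    apply hinj
    rw [hw]
    show (ab (QuotientGroup.mk (x i))).toAdd = (ab (QuotientGroup.mk (x j))).toAdd
    rw [← hQincqh, ← hQincqh]
    exact hfab
  have hS₀v : (S₀ : Set (Fin r → ℤ)) ⊆ Set.range v := by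
    intro s hs
    obtain ⟨i, _, rfl⟩ := Finset.mem_image.mp hs
    exact ⟨e.symm ⟨QuotientGroup.mk (x i), hT i⟩, (hww i).symm⟩
  have hS₀W : (S₀ : Set (Fin r → ℤ)) ⊆ (Wsub r l : Set (Fin r → ℤ)) := by
    intro s hs
    obtain ⟨i, _, rfl⟩ := Finset.mem_image.mp hs
    show w i ∈ Wsub r l
    rw [hw]
    show (ab (QuotientGroup.mk (x i))).toAdd ∈ Wsub r l
    rw [hab, abQ_mk]
    exact abF_hat_mem_W r l (hx i)
  obtain ⟨m, c, hsum, hcW, hcinj, hcnot, hWle⟩ := extend_lemma hlr' v hvspan S₀ hS₀v hS₀W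
  set L : Fin m → NilpotentQuot t (hatSubgroup r l) :=
    fun i => QuotientGroup.mk (⟨eWord r (c i), eWord_mem_hat r l (hcW i)⟩ : hatSubgroup r l)
    with hL
  have habL : ∀ i, (ab (Qinc r l t (L i))).toAdd = c i := by
    intro i
    rw [hL]
    show (ab (Qinc r l t (QuotientGroup.mk _))).toAdd = c i
    rw [Qinc_mk, hab, abQ_mk]
    show (abF r (eWord r (c i))).toAdd = c i
    rw [abF_eWord, toAdd_ofAdd]
  set Th : Finset (NilpotentQuot t (hatSubgroup r l)) := Sh ∪ Finset.image L Finset.univ with hTh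
  have hmem : ∀ i, qh i ∈ Th := by
    intro i
    rw [hTh]
    exact Finset.mem_union_left _ (Finset.mem_image_of_mem qh (Finset.mem_univ i))
  have hLinj : Function.Injective L := by
    intro i j hij
    apply hcinj
    rw [← habL i, ← habL j, hij]
  have hdisj : Disjoint Sh (Finset.image L Finset.univ) := by
    rw [Finset.disjoint_left]
    intro a ha hb
    obtain ⟨i, _, rfl⟩ := Finset.mem_image.mp ha
    obtain ⟨j, _, hji⟩ := Finset.mem_image.mp hb
    have h1 : c j = w i := by
      rw [← habL j, hji, hw]
      show (ab (Qinc r l t (qh i))).toAdd = (ab (QuotientGroup.mk (x i))).toAdd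
      rw [hQincqh]
    apply hcnot j
    rw [h1, hS₀]
    exact Finset.mem_image_of_mem w (Finset.mem_univ i)
  have hcard : Th.card = l := by
    rw [hTh, Finset.card_union_of_disjoint hdisj, Finset.card_image_of_injective _ hLinj,
      Finset.card_univ, Fintype.card_fin, ← hcardeq, hsum]
  -- generation
  set K : Subgroup (NilpotentQuot t (hatSubgroup r l)) := Subgroup.closure (Th : Set _) with hK
  have hgen : ∀ (i : Fin r) (hi : (i : ℕ) < l),
      (QuotientGroup.mk (⟨FreeGroup.of i, of_mem_hat r l hi⟩ : hatSubgroup r l) :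
        NilpotentQuot t (hatSubgroup r l)) ∈ K ⊔ commutator (NilpotentQuot t (hatSubgroup r l)) := by
    intro i hi
    have hcomap : K ⊔ commutator (NilpotentQuot t (hatSubgroup r l)) =
        Subgroup.comap Abelianization.of (Subgroup.map Abelianization.of K) := by
      rw [Subgroup.comap_map_eq, ker_abelianization_of]
    rw [hcomap, Subgroup.mem_comap]
    set M : Submodule ℤ (Additive (Abelianization (NilpotentQuot t (hatSubgroup r l)))) :=
      AddSubgroup.toIntSubmodule (Subgroup.toAddSubgroup (Subgroup.map Abelianization.of K))
      with hM
    have h2 : (Pi.single i 1 : Fin r → ℤ) ∈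
        Submodule.span ℤ ((S₀ : Set (Fin r → ℤ)) ∪ Set.range c) :=
      hWle (single_mem_Wsub i hi 1)
    have h3 : muMap r l t (Pi.single i 1) ∈
        Submodule.map (muMap r l t) (Submodule.span ℤ ((S₀ : Set (Fin r → ℤ)) ∪ Set.range c)) :=
      Submodule.mem_map_of_mem h2
    rw [Submodule.map_span] at h3
    have h4 : Submodule.span ℤ (muMap r l t '' ((S₀ : Set (Fin r → ℤ)) ∪ Set.range c)) ≤ M := by
      rw [Submodule.span_le]
      rintro _ ⟨u, hu, rfl⟩
      rcases hu with hu | hu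
      · obtain ⟨i₀, _, rfl⟩ := Finset.mem_image.mp hu
        have h5 : w i₀ = (ab (Qinc r l t (qh i₀))).toAdd := by
          rw [hw]
          show (ab (QuotientGroup.mk (x i₀))).toAdd = _
          rw [hQincqh]
        rw [h5]
        rw [hab] at *
        rw [muMap_key r l t ht (qh i₀)]
        show Abelianization.of (qh i₀) ∈ Subgroup.map Abelianization.of K
        exact Subgroup.mem_map_of_mem _ (Subgroup.subset_closure (hmem i₀))
      · obtain ⟨i₀, rfl⟩ := hu
        rw [← habL i₀, hab] at *
        rw [muMap_key r l t ht (L i₀)]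
        show Abelianization.of (L i₀) ∈ Subgroup.map Abelianization.of K
        apply Subgroup.mem_map_of_mem
        apply Subgroup.subset_closure
        rw [hTh]
        exact Finset.mem_union_right _ (Finset.mem_image_of_mem L (Finset.mem_univ i₀))
    have h5 := h4 h3
    have h6 : muMap r l t (Pi.single i 1) = Additive.ofMul (Abelianization.of
        (QuotientGroup.mk (⟨FreeGroup.of i, of_mem_hat r l hi⟩ : hatSubgroup r l) :
          NilpotentQuot t (hatSubgroup r l))) := by
      have h7 := muMap_key r l t ht
        (QuotientGroup.mk (⟨FreeGroup.of i, of_mem_hat r l hi⟩ : hatSubgroup r l))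
      have h8 : (abQ r t ht (Qinc r l t (QuotientGroup.mk
          (⟨FreeGroup.of i, of_mem_hat r l hi⟩ : hatSubgroup r l)))).toAdd = Pi.single i 1 := by
        rw [Qinc_mk, abQ_mk]
        show (abF r (FreeGroup.of i)).toAdd = _
        have : abF r (FreeGroup.of i) = Multiplicative.ofAdd (Pi.single i 1) := FreeGroup.lift_apply_of
        rw [this, toAdd_ofAdd]
      rw [h8] at h7
      exact h7
    rw [h6] at h5
    exact h5
  have htop : K ⊔ commutator (NilpotentQuot t (hatSubgroup r l)) = ⊤ := by
    rw [eq_top_iff, ← quot_closure_top r l t, Subgroup.closure_le]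
    rintro _ ⟨y, ⟨i, hi, hyv⟩, rfl⟩
    have hyy : y = ⟨FreeGroup.of i, of_mem_hat r l hi⟩ := Subtype.ext hyv.symm
    rw [hyy]
    exact hgen i hi
  have hKtop : K = ⊤ := frattini_lcs ht (lcs_quot_bot t) htop
  exact ⟨Th, hmem, hKtop, hcard⟩
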